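/- Let m, n be positive integers and let u = (u_1, …, u_n) be a weakly increasing sequence of nonnegative integers with u_k ≤ m(k−1) for all k (the step sequence of a (1,m)-Dyck path of size n). Then the multi-permutation ζ(u) avoids the pattern 312, i.e., there are no positions i < j < k with ζ(u)_j < ζ(u)_k < ζ(u)_i. -/

import Mathlib

/-- `zeta m u N` : starting from the empty sequence, for `i = 1, …, N` in order,
insert a contiguous block of `m` copies of `i` so that exactly `u i` of the
already-present entries lie to its left. -/
def zeta (m : ℕ) (u : ℕ → ℕ) : ℕ → List ℕ
  | 0 => []
  | n + 1 =>
      (zeta m u n).take (u (n + 1)) ++ List.replicate m (n + 1) ++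
        (zeta m u n).drop (u (n + 1))

/-- A list avoids the pattern 312. -/
def ZAvoids (L : List ℕ) : Prop :=
  ∀ i j k : ℕ, ∀ _hij : i < j, ∀ _hjk : j < k, ∀ hk : k < L.length,
    ¬ (L[j]'(lt_trans _hjk hk) < L[k]'hk ∧
       L[k]'hk < L[i]'(lt_trans _hij (lt_trans _hjk hk)))

lemma zeta_invariant (m : ℕ) (hm : 0 < m) (u : ℕ → ℕ) :
    ∀ n, 1 ≤ n → (∀ k, 1 ≤ k → k < n → u k ≤ u (k + 1)) →
      (∀ k, 1 ≤ k → k ≤ n → u k ≤ m * (k - 1)) →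
      (zeta m u n).length = m * n ∧ (∀ x ∈ zeta m u n, x ≤ n) ∧
        ((zeta m u n).drop (u n)).Pairwise (· ≥ ·) ∧ ZAvoids (zeta m u n) := by
  intro n hn
  induction n, hn using Nat.le_induction with
  | base =>
    intro _ _
    have hz : zeta m u 1 = List.replicate m 1 := by simp [zeta]
    rw [hz]
    refine ⟨by simp [Nat.mul_one], ?_, ?_, ?_⟩
    · intro x hx; exact le_of_eq (List.eq_of_mem_replicate hx)
    · exact List.Pairwise.sublist (List.drop_sublist _ _)
        (List.pairwise_replicate.mpr (Or.inr (le_refl 1)))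
    · intro i j k hij hjk hk ⟨h1, h2⟩
      simp only [List.getElem_replicate] at h1
      exact lt_irrefl _ h1
  | succ n hn IH =>
    intro hmono hbound
    obtain ⟨hlen, hle, hsorted, havoid⟩ := IH
      (fun k h1 h2 => hmono k h1 (by omega))
      (fun k h1 h2 => hbound k h1 (by omega))
    set L := zeta m u n with hL
    set p := u (n + 1) with hp
    have hpL : p ≤ L.length := by
      have := hbound (n + 1) (by omega) (le_refl _)
      simp only [Nat.add_sub_cancel] at this
      omega
    have hup : u n ≤ p := hmono n hn (by omega)
    have htake : (L.take p).length = p := by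
      simp [List.length_take, Nat.min_eq_left hpL]
    have hz : zeta m u (n + 1) = L.take p ++ List.replicate m (n + 1) ++ L.drop p := by
      simp [zeta]; rfl
    -- sortedness of the tail of L from position p
    have hsorted' : (L.drop p).Pairwise (· ≥ ·) := by
      have : L.drop p = (L.drop (u n)).drop (p - u n) := by
        rw [List.drop_drop]
        congr 1
        omega
      rw [this]
      exact List.Pairwise.sublist (List.drop_sublist _ _) hsorted
    rw [hz]
    have hms : m * (n + 1) = m * n + m := Nat.mul_succ m n
    have hlen' : (L.take p ++ List.replicate m (n + 1) ++ L.drop p).length = m * (n + 1) := by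
      rw [List.length_append, List.length_append, htake, List.length_replicate,
        List.length_drop, hlen]
      omega
    refine ⟨hlen', ?_, ?_, ?_⟩
    · -- bound on entries
      intro x hx
      simp only [List.mem_append] at hx
      rcases hx with (hx | hx) | hx
      · exact le_trans (hle x ((List.take_sublist _ _).mem hx)) (by omega)
      · exact le_of_eq (List.eq_of_mem_replicate hx)
      · exact le_trans (hle x ((List.drop_sublist _ _).mem hx)) (by omega)
    · -- sortedness of the tail from position u (n+1) = p
      have hdrop : (L.take p ++ List.replicate m (n + 1) ++ L.drop p).drop p
          = List.replicate m (n + 1) ++ L.drop p := by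
        have h0 := List.drop_left (l₁ := L.take p) (l₂ := List.replicate m (n + 1) ++ L.drop p)
        rw [htake] at h0
        rw [List.append_assoc]
        exact h0
      rw [hdrop]
      rw [List.pairwise_append]
      refine ⟨List.pairwise_replicate.mpr (Or.inr (le_refl _)), hsorted', ?_⟩
      intro a ha b hb
      have := List.eq_of_mem_replicate ha
      have hb' := hle b ((List.drop_sublist _ _).mem hb)
      subst this; omega
    · -- avoidance
      have hlenL' : (L.take p ++ List.replicate m (n + 1) ++ L.drop p).length
          = L.length + m := by
        rw [List.length_append, List.length_append, htake, List.length_replicate,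
          List.length_drop]
        omega
      -- get lemmas
      have hlen2 : (L.take p ++ List.replicate m (n + 1)).length = p + m := by
        rw [List.length_append, htake, List.length_replicate]
      have g1 : ∀ t (ht : t < p), (L.take p ++ List.replicate m (n + 1) ++ L.drop p)[t]'(by omega) = L[t]'(by omega) := by
        intro t ht
        rw [List.getElem_append_left (by rw [hlen2]; omega)]
        rw [List.getElem_append_left (by rw [htake]; omega)]
        exact List.getElem_take
      have g2 : ∀ t (ht1 : p ≤ t) (ht2 : t < p + m), (L.take p ++ List.replicate m (n + 1) ++ L.drop p)[t]'(by omega) = n + 1 := by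
        intro t ht1 ht2
        rw [List.getElem_append_left (by rw [hlen2]; omega)]
        rw [List.getElem_append_right (by rw [htake]; omega)]
        exact List.getElem_replicate _
      have g3 : ∀ t (ht1 : p + m ≤ t) (ht2 : t < L.length + m),
          (L.take p ++ List.replicate m (n + 1) ++ L.drop p)[t]'(by omega) = L[t - m]'(by omega) := by
        intro t ht1 ht2
        rw [List.getElem_append_right (by rw [hlen2]; omega)]
        rw [List.getElem_drop]
        congr 1
        rw [hlen2]
        omega
      -- every entry is ≤ n+1
      have hball : ∀ t (ht : t < L.length + m), (L.take p ++ List.replicate m (n + 1) ++ L.drop p)[t]'(by omega) ≤ n + 1 := by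
        intro t ht
        rcases Nat.lt_or_ge t p with h | h
        · rw [g1 t h]; exact le_trans (hle _ (List.getElem_mem _)) (by omega)
        rcases Nat.lt_or_ge t (p + m) with h2 | h2
        · rw [g2 t h h2]
        · rw [g3 t h2 ht]; exact le_trans (hle _ (List.getElem_mem _)) (by omega)
      -- sorted tail gives: indices ≥ p are weakly decreasing in L
      have hdec : ∀ a b, ∀ _ha : p ≤ a, ∀ hab : a < b, ∀ hb : b < L.length,
          L[b]'hb ≤ L[a]'(lt_trans hab hb) := by
        intro a b ha hab hb
        have h1 : a - p < (L.drop p).length := by rw [List.length_drop]; omega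
        have h2 : b - p < (L.drop p).length := by rw [List.length_drop]; omega
        have := (List.pairwise_iff_getElem.mp hsorted') (a - p) (b - p) h1 h2 (by omega)
        rw [List.getElem_drop, List.getElem_drop] at this
        have ea : p + (a - p) = a := by omega
        have eb : p + (b - p) = b := by omega
        simp only [ea, eb] at this
        exact this
      intro i j k hij hjk hk ⟨h1, h2⟩
      rw [hlenL'] at hk
      -- j cannot be in the block
      rcases Nat.lt_or_ge j p with hjp | hjp
      · -- j in prefix, so i in prefix
        rcases Nat.lt_or_ge k p with hkp | hkp
        · -- all in prefix
          rw [g1 j hjp, g1 k hkp] at h1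
          rw [g1 k hkp, g1 i (by omega)] at h2
          exact havoid i j k hij hjk (by omega) ⟨h1, h2⟩
        rcases Nat.lt_or_ge k (p + m) with hkm | hkm
        · -- k in block: L'[k] = n+1 < L'[i] ≤ n+1
          rw [g2 k hkp hkm] at h2
          have := hball i (by omega)
          omega
        · -- i,j prefix, k after block
          rw [g1 j hjp, g3 k hkm hk] at h1
          rw [g3 k hkm hk, g1 i (by omega)] at h2
          exact havoid i j (k - m) hij (by omega) (by omega) ⟨h1, h2⟩
      rcases Nat.lt_or_ge j (p + m) with hjm | hjm
      · -- j in block: L'[j] = n+1 < L'[k] ≤ n+1, contradiction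
        rw [g2 j hjp hjm] at h1
        have := hball k hk
        omega
      · -- j after block, so k after block
        have hkm : p + m ≤ k := by omega
        rw [g3 j hjm (by omega), g3 k hkm hk] at h1
        -- but positions j-m, k-m ≥ p are weakly decreasing
        have := hdec (j - m) (k - m) (by omega) (by omega) (by omega)
        omega

theorem zeta_avoids_312 (m n : ℕ) (hm : 0 < m) (hn : 0 < n) (u : ℕ → ℕ)
    (hmono : ∀ k, 1 ≤ k → k < n → u k ≤ u (k + 1))
    (hbound : ∀ k, 1 ≤ k → k ≤ n → u k ≤ m * (k - 1)) :
    ∀ i j k : Fin (zeta m u n).length, i < j → j < k →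
      ¬((zeta m u n).get j < (zeta m u n).get k ∧
        (zeta m u n).get k < (zeta m u n).get i) := by
  obtain ⟨-, -, -, hav⟩ := zeta_invariant m hm u n hn hmono hbound
  intro i j k hij hjk h
  simp only [List.get_eq_getElem] at h
  exact hav i.val j.val k.val hij hjk k.isLt h
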